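/- Let F be a field, A the n×n regular nilpotent Jordan block, and 0 < i < n. Define R ⊆ Fⁿ × Fⁿ × Fⁿ × Fⁿ as the set of tuples (v₁, φ₁, v₂, φ₂) with v₁, v₂ ∈ Ker(Aⁱ), φ₁, φ₂ ∈ Ker((Aᵗ)^{n-i}), such that there exists a nilpotent matrix B with [A, B] = v₁ φ₂ᵗ − v₂ φ₁ᵗ. Then every element of R satisfies (v₁)_i (φ₂)_{i+1} − (v₂)_i (φ₁)_{i+1} = 0. -/

import Mathlib

open Matrix

def jordanBlock (F : Type*) [Field F] (n : ℕ) : Matrix (Fin n) (Fin n) F :=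
  Matrix.of fun k l => if (l : ℕ) = (k : ℕ) + 1 then 1 else 0

lemma jb_pow_apply (F : Type*) [Field F] (n m : ℕ) (k l : Fin n) :
    ((jordanBlock F n) ^ m) k l = if (l : ℕ) = (k : ℕ) + m then 1 else 0 := by
  induction m generalizing l with
  | zero =>
    simp [Matrix.one_apply, Fin.ext_iff, eq_comm]
  | succ m ih =>
    rw [pow_succ, Matrix.mul_apply]
    simp only [ih]
    simp only [jordanBlock, Matrix.of_apply]
    by_cases h : (l : ℕ) = (k : ℕ) + (m + 1)
    · have hlt : (k : ℕ) + m < n := by have := l.isLt; omega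
      rw [Finset.sum_eq_single (⟨(k:ℕ)+m, hlt⟩ : Fin n)]
      · simp only [h, if_pos rfl]
        simp [Nat.add_assoc]
      · intro t _ ht
        have : (t : ℕ) ≠ (k : ℕ) + m := by simpa [Fin.ext_iff] using ht
        simp [this]
      · simp
    · rw [if_neg h, Finset.sum_eq_zero]
      intro t _
      by_cases h1 : (t : ℕ) = (k : ℕ) + m
      · have : (l : ℕ) ≠ (t : ℕ) + 1 := by omega
        simp [this]
      · simp [h1]

lemma ker_pow_vanish (F : Type*) [Field F] {n i : ℕ} (v : Fin n → F)
    (hv : (jordanBlock F n ^ i) *ᵥ v = 0) (j : Fin n) (hj : i ≤ (j : ℕ)) : v j = 0 := by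
  have h := congrFun hv ⟨(j : ℕ) - i, by omega⟩
  simp only [mulVec, dotProduct, jb_pow_apply, Pi.zero_apply] at h
  rw [Finset.sum_eq_single j] at h
  · simpa [show ((j:ℕ) - i) + i = (j:ℕ) from by omega] using h
  · intro t _ ht
    have : (t : ℕ) ≠ ((j:ℕ) - i) + i := by
      have : (t:ℕ) ≠ (j:ℕ) := fun he => ht (Fin.ext he)
      omega
    simp [this]
  · simp

lemma ker_powT_vanish (F : Type*) [Field F] {n i : ℕ} (hin : i < n) (φ : Fin n → F)
    (hφ : ((jordanBlock F n)ᵀ ^ (n - i)) *ᵥ φ = 0) (j : Fin n) (hj : (j : ℕ) < i) : φ j = 0 := by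
  have h := congrFun hφ ⟨(j : ℕ) + (n - i), by omega⟩
  rw [← Matrix.transpose_pow] at h
  simp only [mulVec, dotProduct, Matrix.transpose_apply, jb_pow_apply, Pi.zero_apply] at h
  rw [Finset.sum_eq_single j] at h
  · simpa using h
  · intro t _ ht
    have : (j:ℕ) + (n - i) ≠ (t : ℕ) + (n - i) := by
      have : (t:ℕ) ≠ (j:ℕ) := fun he => ht (Fin.ext he)
      omega
    rw [if_neg this, zero_mul]
  · simp

lemma sum_pick {F : Type*} [Field F] {n : ℕ} (c : ℕ) (x : Fin n → F) :
    (∑ t : Fin n, (if (t : ℕ) = c then 1 else 0) * x t) =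
      if h : c < n then x ⟨c, h⟩ else 0 := by
  by_cases h : c < n
  · rw [dif_pos h, Finset.sum_eq_single (⟨c, h⟩ : Fin n)]
    · simp
    · intro t _ ht
      have : (t : ℕ) ≠ c := by simpa [Fin.ext_iff] using ht
      simp [this]
    · simp
  · rw [dif_neg h, Finset.sum_eq_zero]
    intro t _
    have : (t : ℕ) ≠ c := by have := t.isLt; omega
    simp [this]

lemma sum_pick' {F : Type*} [Field F] {n : ℕ} (l : Fin n) (x : Fin n → F) :
    (∑ t : Fin n, x t * (if (l : ℕ) = (t : ℕ) + 1 then 1 else 0)) =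
      if _ : 1 ≤ (l : ℕ) then x ⟨(l : ℕ) - 1, by omega⟩ else 0 := by
  by_cases h : 1 ≤ (l : ℕ)
  · rw [dif_pos h, Finset.sum_eq_single (⟨(l:ℕ) - 1, by omega⟩ : Fin n)]
    · have : (l : ℕ) = ((l:ℕ) - 1) + 1 := by omega
      simp [← this]
    · intro t _ ht
      have : (l : ℕ) ≠ (t : ℕ) + 1 := by
        have : (t : ℕ) ≠ (l:ℕ) - 1 := by simpa [Fin.ext_iff] using ht
        omega
      simp [this]
    · simp
  · rw [dif_neg h, Finset.sum_eq_zero]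
    intro t _
    have : (l : ℕ) ≠ (t : ℕ) + 1 := by omega
    simp [this]

theorem stmt_14 (F : Type*) [Field F] [CharZero F] (n i : ℕ) (hi : 0 < i) (hin : i < n)
    (v₁ v₂ φ₁ φ₂ : Fin n → F)
    (hv₁ : (jordanBlock F n ^ i) *ᵥ v₁ = 0) (hv₂ : (jordanBlock F n ^ i) *ᵥ v₂ = 0)
    (hφ₁ : ((jordanBlock F n)ᵀ ^ (n - i)) *ᵥ φ₁ = 0)
    (hφ₂ : ((jordanBlock F n)ᵀ ^ (n - i)) *ᵥ φ₂ = 0)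
    (hB : ∃ B : Matrix (Fin n) (Fin n) F, IsNilpotent B ∧
      jordanBlock F n * B - B * jordanBlock F n =
        Matrix.vecMulVec v₁ φ₂ - Matrix.vecMulVec v₂ φ₁) :
    v₁ ⟨i - 1, by omega⟩ * φ₂ ⟨i, by omega⟩ - v₂ ⟨i - 1, by omega⟩ * φ₁ ⟨i, by omega⟩ = 0 := by
  obtain ⟨B, hBnil, hC⟩ := hB
  have hv₁' := ker_pow_vanish F v₁ hv₁
  have hv₂' := ker_pow_vanish F v₂ hv₂
  have hφ₁' := ker_powT_vanish F hin φ₁ hφ₁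
  have hφ₂' := ker_powT_vanish F hin φ₂ hφ₂
  have hn0 : 0 < n := by omega
  have hnn : n - 1 < n := by omega
  set z : Fin n := ⟨0, hn0⟩ with hz
  set n1 : Fin n := ⟨n - 1, hnn⟩ with hn1
  -- entrywise commutator formula
  have hent : ∀ k l : Fin n,
      (if h : (k : ℕ) + 1 < n then B ⟨(k:ℕ)+1, h⟩ l else 0) -
      (if _ : 1 ≤ (l : ℕ) then B k ⟨(l:ℕ)-1, by omega⟩ else 0) =
      v₁ k * φ₂ l - v₂ k * φ₁ l := by
    intro k l
    have h := congrFun (congrFun hC k) l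
    simp only [Matrix.sub_apply, Matrix.mul_apply, Matrix.vecMulVec_apply,
      jordanBlock, Matrix.of_apply] at h
    rw [sum_pick ((k:ℕ)+1) (fun t => B t l), sum_pick' l (fun t => B k t)] at h
    exact h
  have hentN : ∀ (k l : ℕ) (hk : k < n) (hl : l < n),
      (if h : k + 1 < n then B ⟨k+1, h⟩ ⟨l, hl⟩ else 0) -
      (if _ : 1 ≤ l then B ⟨k, hk⟩ ⟨l-1, by omega⟩ else 0) =
      v₁ ⟨k, hk⟩ * φ₂ ⟨l, hl⟩ - v₂ ⟨k, hk⟩ * φ₁ ⟨l, hl⟩ := by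
    intro k l hk hl
    have h := hent ⟨k, hk⟩ ⟨l, hl⟩
    simpa using h
  have hφz : ∀ t : Fin n, φ₂ z = 0 ∧ φ₁ z = 0 := by
    intro t
    exact ⟨hφ₂' z (by simpa [hz] using hi), hφ₁' z (by simpa [hz] using hi)⟩
  -- first column of B vanishes off the corner
  have hcol : ∀ t : Fin n, t ≠ z → B t z = 0 := by
    intro t ht
    have ht1 : 1 ≤ (t : ℕ) := by
      rcases Nat.eq_zero_or_pos (t : ℕ) with h | h
      · exact absurd (Fin.ext (by simpa [hz] using h)) ht
      · exact h
    have h := hentN ((t:ℕ) - 1) 0 (by omega) hn0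
    rw [dif_pos (show ((t:ℕ)-1) + 1 < n from by have := t.isLt; omega)] at h
    rw [dif_neg (show ¬ (1 ≤ 0) from by omega)] at h
    rw [(hφz t).1, (hφz t).2, mul_zero, mul_zero, sub_self, sub_zero] at h
    have htt : t = ⟨((t:ℕ)-1) + 1, by have := t.isLt; omega⟩ := Fin.ext (by simp; omega)
    rw [htt]
    exact h
  -- last row of B vanishes off the corner
  have hrow : ∀ t : Fin n, t ≠ n1 → B n1 t = 0 := by
    intro t ht
    have ht1 : (t : ℕ) + 1 < n := by
      have h2 := t.isLt
      have : (t : ℕ) ≠ n - 1 := fun he => ht (Fin.ext (by simpa [hn1] using he))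
      omega
    have h := hentN (n-1) ((t:ℕ) + 1) hnn ht1
    rw [dif_neg (show ¬ ((n-1) + 1 < n) from by omega)] at h
    rw [dif_pos (show 1 ≤ (t:ℕ) + 1 from by omega)] at h
    have hv1 : v₁ (⟨n-1, hnn⟩ : Fin n) = 0 := hv₁' _ (by simp; omega)
    have hv2 : v₂ (⟨n-1, hnn⟩ : Fin n) = 0 := hv₂' _ (by simp; omega)
    rw [hv1, hv2, zero_mul, zero_mul, sub_self, zero_sub, neg_eq_zero] at h
    have htt : t = ⟨((t:ℕ)+1) - 1, by omega⟩ := Fin.ext (by simp)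
    rw [hn1, htt]
    exact h
  -- corner diagonal entries are zero by nilpotency
  obtain ⟨N, hN⟩ := hBnil
  have hBN1 : B ^ (N + 1) = 0 := by rw [pow_succ, hN, Matrix.zero_mul]
  have hB00 : B z z = 0 := by
    have hpow : ∀ m : ℕ, (B ^ (m+1)) z z = (B z z) ^ (m+1) := by
      intro m
      induction m with
      | zero => simp
      | succ m ih =>
        rw [pow_succ, Matrix.mul_apply, Finset.sum_eq_single z]
        · rw [ih, ← pow_succ]
        · intro t _ ht
          rw [hcol t ht, mul_zero]
        · simp
    have := hpow N
    rw [hBN1] at this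
    have h0 : (B z z) ^ (N + 1) = 0 := by simpa using this.symm
    exact pow_eq_zero_iff (Nat.succ_ne_zero N) |>.mp h0
  have hBnn : B n1 n1 = 0 := by
    have hpow : ∀ m : ℕ, (B ^ (m+1)) n1 n1 = (B n1 n1) ^ (m+1) := by
      intro m
      induction m with
      | zero => simp
      | succ m ih =>
        rw [pow_succ', Matrix.mul_apply, Finset.sum_eq_single n1]
        · rw [ih, ← pow_succ']
        · intro t _ ht
          rw [hrow t ht, zero_mul]
        · simp
    have := hpow N
    rw [hBN1] at this
    have h0 : (B n1 n1) ^ (N + 1) = 0 := by simpa using this.symm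
    exact pow_eq_zero_iff (Nat.succ_ne_zero N) |>.mp h0
  -- telescoping the superdiagonal
  set f : ℕ → F := fun k => if h : k < n then B ⟨k, h⟩ ⟨k, h⟩ else 0 with hf
  set g : ℕ → F := fun k => if h : k + 1 < n then
      v₁ ⟨k, by omega⟩ * φ₂ ⟨k+1, h⟩ - v₂ ⟨k, by omega⟩ * φ₁ ⟨k+1, h⟩ else 0 with hg
  have hstep : ∀ k, k + 1 < n → f (k+1) - f k = g k := by
    intro k hk
    have h := hentN k (k+1) (by omega) hk
    rw [dif_pos hk] at h
    rw [dif_pos (show 1 ≤ k + 1 from by omega)] at h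
    have e1 : (⟨(k+1) - 1, by omega⟩ : Fin n) = ⟨k, by omega⟩ := Fin.ext (by simp)
    rw [e1] at h
    rw [hf, hg]
    simp only [dif_pos hk, dif_pos (show k < n from by omega)]
    exact h
  have hsum : ∑ k ∈ Finset.range (n-1), g k = 0 := by
    have : ∑ k ∈ Finset.range (n-1), g k = ∑ k ∈ Finset.range (n-1), (f (k+1) - f k) := by
      apply Finset.sum_congr rfl
      intro k hk
      have hk' : k + 1 < n := by
        have := Finset.mem_range.mp hk; omega
      exact (hstep k hk').symm
    rw [this, Finset.sum_range_sub f]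
    have hfz : f 0 = 0 := by
      simp only [hf, dif_pos (show 0 < n from by omega)]
      exact hB00
    have hfn : f (n-1) = 0 := by
      simp only [hf, dif_pos (show n - 1 < n from by omega)]
      exact hBnn
    rw [hfz, hfn, sub_zero]
  have hsingle : ∑ k ∈ Finset.range (n-1), g k = g (i-1) := by
    apply Finset.sum_eq_single (i-1)
    · intro k hk hki
      have hk' : k + 1 < n := by have := Finset.mem_range.mp hk; omega
      simp only [hg, dif_pos hk']
      rcases lt_or_gt_of_ne hki with h | h
      · -- k < i - 1, so k + 1 < i : φ's vanish
        have h1 : φ₂ ⟨k+1, hk'⟩ = 0 := hφ₂' _ (by simp; omega)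
        have h2 : φ₁ ⟨k+1, hk'⟩ = 0 := hφ₁' _ (by simp; omega)
        rw [h1, h2]; ring
      · -- k > i - 1, so i ≤ k : v's vanish
        have h1 : v₁ (⟨k, by omega⟩ : Fin n) = 0 := hv₁' _ (by simp; omega)
        have h2 : v₂ (⟨k, by omega⟩ : Fin n) = 0 := hv₂' _ (by simp; omega)
        rw [h1, h2]; ring
    · intro hni
      exact absurd (Finset.mem_range.mpr (by omega)) hni
  have hgi : g (i-1) = v₁ ⟨i - 1, by omega⟩ * φ₂ ⟨i, by omega⟩ -
      v₂ ⟨i - 1, by omega⟩ * φ₁ ⟨i, by omega⟩ := by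
    have hii : i - 1 + 1 = i := by omega
    simp only [hg, dif_pos (show i - 1 + 1 < n from by omega)]
    congr 1 <;> congr 1 <;> apply congrArg <;> exact Fin.ext (by simp [hii])
  rw [← hgi, ← hsingle, hsum]
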